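/- Let L and M be compact connected linearly ordered topological spaces. Then Hom_p(L ⊕ M), the homeomorphism group of the topological sum (disjoint union) of L and M with the topology of pointwise convergence, is a topological group. -/

import Mathlib

open Set Topology

universe u

/-- A topological space is a LOTS if it is homeomorphic to a linear order with the order topology. -/
def IsLOTS (Y : Type u) [TopologicalSpace Y] : Prop :=
  ∃ (L : Type u) (lo : LinearOrder L) (ts : TopologicalSpace L),
    @OrderTopology L ts lo.toPartialOrder.toPreorder ∧ Nonempty (Y ≃ₜ L)

/-- The set of locally ordered points of `X`. -/
def LO (X : Type u) [TopologicalSpace X] : Set X :=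
  {x | ∃ U : Set X, IsOpen U ∧ x ∈ U ∧ IsLOTS ↥U}

/-- Orderly open sets. -/
def Orderly {X : Type u} [TopologicalSpace X] (U : Set X) : Prop :=
  IsOpen U ∧ U = interior (closure U) ∧ IsConnected U ∧
    (closure U \ U).Finite ∧ closure U \ U ⊆ LO X

/-- Topology of pointwise convergence on the homeomorphism group. -/
instance homPt (X : Type u) [TopologicalSpace X] : TopologicalSpace (X ≃ₜ X) :=
  TopologicalSpace.induced (fun f => (f : X → X)) Pi.topologicalSpace

open Filter Uniformity

set_option linter.unusedSectionVars false

/-- Composition of relations (old name). -/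
def compRel {α : Type*} (r₁ r₂ : Set (α × α)) : Set (α × α) := SetRel.comp r₁ r₂

lemma compRel_mono {α : Type*} {f g h k : Set (α × α)} (h₁ : f ⊆ h) (h₂ : g ⊆ k) :
    compRel f g ⊆ compRel h k :=
  SetRel.comp_subset_comp h₁ h₂

/-- The continuous map underlying a homeomorphism (old name). -/
def Homeomorph.toContinuousMap {α β : Type*} [TopologicalSpace α] [TopologicalSpace β]
    (f : α ≃ₜ β) : C(α, β) :=
  ⟨f, f.continuous⟩

section OneOrder

variable {α : Type*} [LinearOrder α] [TopologicalSpace α] [OrderTopology α]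

/-- Every neighborhood contains an open order-connected neighborhood. -/
lemma exists_ordConnected_nhd {a : α} {U : Set α} (hU : U ∈ 𝓝 a) :
    ∃ I : Set α, IsOpen I ∧ I.OrdConnected ∧ a ∈ I ∧ I ⊆ U := by
  by_cases hl : ∃ l, l < a
  · by_cases hu : ∃ u, a < u
    · obtain ⟨l, u, haI, hsub⟩ := mem_nhds_iff_exists_Ioo_subset' hl hu |>.1 hU
      exact ⟨Ioo l u, isOpen_Ioo, ordConnected_Ioo, haI, hsub⟩
    · push_neg at hu
      obtain ⟨l', hl', hsub⟩ := exists_Ioc_subset_of_mem_nhds hU hl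
      refine ⟨Ioi l', isOpen_Ioi, ordConnected_Ioi, hl', fun y hy => hsub ⟨hy, hu y⟩⟩
  · push_neg at hl
    by_cases hu : ∃ u, a < u
    · obtain ⟨u', hu', hsub⟩ := exists_Ico_subset_of_mem_nhds hU hu
      refine ⟨Iio u', isOpen_Iio, ordConnected_Iio, hu', fun y hy => hsub ⟨hl y, hy⟩⟩
    · push_neg at hu
      refine ⟨univ, isOpen_univ, ordConnected_univ, trivial, fun y _ => ?_⟩
      have : y = a := le_antisymm (hu y) (hl y)
      exact this ▸ mem_of_mem_nhds hU

lemma denselyOrdered_of_connected [ConnectedSpace α] : DenselyOrdered α := by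
  constructor
  intro a b hab
  by_contra hne
  push_neg at hne
  obtain ⟨c, -, hc1, hc2⟩ := isPreconnected_univ (Iio b) (Ioi a) isOpen_Iio isOpen_Ioi
    (fun y _ => (lt_or_ge y b).imp id (fun h => lt_of_lt_of_le hab h))
    ⟨a, trivial, hab⟩ ⟨b, trivial, hab⟩
  exact absurd hc1 (not_lt.2 (hne c hc2))

variable [CompactSpace α] [ConnectedSpace α]

private lemma icc_aux {a c p q : α} {u v : Set α} (hu : IsOpen u) (hv : IsOpen v)
    (hcov : Icc a c ⊆ u ∪ v) (hp : p ∈ Icc a c) (hq : q ∈ Icc a c)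
    (hpu : p ∈ u) (hqv : q ∈ v) (hpq : p ≤ q) : (Icc a c ∩ (u ∩ v)).Nonempty := by
  haveI : DenselyOrdered α := denselyOrdered_of_connected
  set T : Set α := Icc p q ∩ u with hT
  have hTne : T.Nonempty := ⟨p, ⟨le_rfl, hpq⟩, hpu⟩
  have hTsub : closure T ⊆ Icc p q := closure_minimal inter_subset_left isClosed_Icc
  have hTcc : IsCompact (closure T) := IsClosed.isCompact isClosed_closure
  obtain ⟨s, hsmem, hsub⟩ := hTcc.exists_isGreatest hTne.closure
  have hsIcc : s ∈ Icc p q := hTsub hsmem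
  have hsac : s ∈ Icc a c := Icc_subset_Icc hp.1 hq.2 hsIcc
  by_cases hsv : s ∈ v
  · obtain ⟨t, htv, htT⟩ := mem_closure_iff_nhds.1 hsmem v (hv.mem_nhds hsv)
    exact ⟨t, Icc_subset_Icc hp.1 hq.2 htT.1, htT.2, htv⟩
  · have hsu : s ∈ u := (hcov hsac).resolve_right hsv
    have hsq : s < q := lt_of_le_of_ne hsIcc.2 (by rintro rfl; exact hsv hqv)
    obtain ⟨u', hsu', hIco⟩ := exists_Ico_subset_of_mem_nhds (hu.mem_nhds hsu) ⟨q, hsq⟩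
    obtain ⟨d, hsd, hdu'⟩ := exists_between hsu'
    set t := min d q with ht
    have hst : s < t := lt_min hsd hsq
    have htu : t ∈ u := hIco ⟨hst.le, lt_of_le_of_lt (min_le_left _ _) hdu'⟩
    have htT : t ∈ T := ⟨⟨hsIcc.1.trans hst.le, min_le_right _ _⟩, htu⟩
    exact absurd (hsub (subset_closure htT)) (not_le.2 hst)

lemma icc_preconnected (a c : α) : IsPreconnected (Icc a c) := by
  intro u v hu hv hcov ⟨p, hp, hpu⟩ ⟨q, hq, hqv⟩
  rcases le_total p q with h | h
  · exact icc_aux hu hv hcov hp hq hpu hqv h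
  · obtain ⟨t, ht1, ht2, ht3⟩ := icc_aux hv hu (by rwa [union_comm]) hq hp hqv hpu h
    exact ⟨t, ht1, ht3, ht2⟩

lemma chain_cover {𝒥 : Set (Set α)} (hopen : ∀ I ∈ 𝒥, IsOpen I)
    (hconn : ∀ I ∈ 𝒥, I.OrdConnected) (hcov : ∀ x : α, ∃ I ∈ 𝒥, x ∈ I) :
    ∃ F : Finset α, ∀ x : α, ∃ a ∈ F, ∃ c ∈ F, a ≤ x ∧ x ≤ c ∧ ∃ I ∈ 𝒥, Icc a c ⊆ I := by
  haveI : DenselyOrdered α := denselyOrdered_of_connected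
  set S : Set α := {b | ∃ F : Finset α,
    ∀ x ≤ b, ∃ a ∈ F, ∃ c ∈ F, a ≤ x ∧ x ≤ c ∧ ∃ I ∈ 𝒥, Icc a c ⊆ I} with hS
  obtain ⟨b₀, -, hb₀⟩ := isCompact_univ.exists_isLeast (univ_nonempty (α := α))
  have hb₀S : b₀ ∈ S := by
    refine ⟨{b₀}, fun x hx => ?_⟩
    have hxe : x = b₀ := le_antisymm hx (hb₀ (mem_univ x))
    subst hxe
    obtain ⟨I, hI, hxI⟩ := hcov x
    exact ⟨x, Finset.mem_singleton_self x, x, Finset.mem_singleton_self x, le_rfl, le_rfl,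
      I, hI, by rw [Icc_self]; exact singleton_subset_iff.2 hxI⟩
  have hScc : IsCompact (closure S) := IsClosed.isCompact isClosed_closure
  obtain ⟨c, hcmem, hcub⟩ := hScc.exists_isGreatest ⟨b₀, subset_closure hb₀S⟩
  obtain ⟨I, hI𝒥, hcI⟩ := hcov c
  obtain ⟨b, hbI, hbS⟩ := mem_closure_iff_nhds.1 hcmem I ((hopen I hI𝒥).mem_nhds hcI)
  obtain ⟨F, hF⟩ := hbS
  set FC : Finset α := F ∪ {b, c} with hFC
  have hbFC : b ∈ FC := Finset.mem_union_right _ (by simp)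
  have hcFC : c ∈ FC := Finset.mem_union_right _ (by simp)
  have hFCc : ∀ x ≤ c, ∃ a ∈ FC, ∃ c' ∈ FC, a ≤ x ∧ x ≤ c' ∧ ∃ I ∈ 𝒥, Icc a c' ⊆ I := by
    intro x hx
    by_cases hxb : x ≤ b
    · obtain ⟨a', ha', c', hc', h1, h2, h3⟩ := hF x hxb
      exact ⟨a', Finset.mem_union_left _ ha', c', Finset.mem_union_left _ hc', h1, h2, h3⟩
    · exact ⟨b, hbFC, c, hcFC, (not_le.1 hxb).le, hx, I, hI𝒥, (hconn I hI𝒥).out hbI hcI⟩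
  have hctop : ∀ x, x ≤ c := by
    intro x
    by_contra hx
    have hcx : c < x := not_le.1 hx
    obtain ⟨u', hcu', hIco⟩ := exists_Ico_subset_of_mem_nhds ((hopen I hI𝒥).mem_nhds hcI) ⟨x, hcx⟩
    obtain ⟨d, hcd, hdu'⟩ := exists_between hcu'
    have hdI : d ∈ I := hIco ⟨hcd.le, hdu'⟩
    have hdS : d ∈ S := by
      refine ⟨FC ∪ {d}, fun x' hx' => ?_⟩
      by_cases hx'c : x' ≤ c
      · obtain ⟨a', ha', c', hc', h1, h2, h3⟩ := hFCc x' hx'c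
        exact ⟨a', Finset.mem_union_left _ ha', c', Finset.mem_union_left _ hc', h1, h2, h3⟩
      · exact ⟨c, Finset.mem_union_left _ hcFC, d, Finset.mem_union_right _ (by simp),
          (not_le.1 hx'c).le, hx', I, hI𝒥, (hconn I hI𝒥).out hcI hdI⟩
    exact absurd (hcub (subset_closure hdS)) (not_le.2 hcd)
  exact ⟨FC, fun x => hFCc x (hctop x)⟩

end OneOrder

section Between

variable {α β : Type*} [LinearOrder α] [TopologicalSpace α] [OrderTopology α]
  [CompactSpace α] [ConnectedSpace α]
  [LinearOrder β] [TopologicalSpace β] [OrderTopology β]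

private lemma btw_aux [DenselyOrdered β] {h : α → β} (hcont : Continuous h)
    (hinj : Function.Injective h) {a x c : α} (hax : a ≤ x) (hxc : x ≤ c) :
    ¬(h a < h x ∧ h c < h x) := by
  rintro ⟨h1, h2⟩
  obtain ⟨v, hv1, hv2⟩ := exists_between (max_lt h1 h2)
  obtain ⟨y₁, hy₁mem, hy₁⟩ := (icc_preconnected a x).intermediate_value
    (⟨le_rfl, hax⟩ : a ∈ Icc a x) (⟨hax, le_rfl⟩ : x ∈ Icc a x) hcont.continuousOn
    ⟨(le_max_left _ _).trans hv1.le, hv2.le⟩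
  obtain ⟨y₂, hy₂mem, hy₂⟩ := (icc_preconnected x c).intermediate_value
    (⟨hxc, le_rfl⟩ : c ∈ Icc x c) (⟨le_rfl, hxc⟩ : x ∈ Icc x c) hcont.continuousOn
    ⟨(le_max_right _ _).trans hv1.le, hv2.le⟩
  have heq : y₁ = y₂ := hinj (hy₁.trans hy₂.symm)
  have hy₁x : y₁ = x := le_antisymm hy₁mem.2 (heq ▸ hy₂mem.1)
  rw [hy₁x] at hy₁
  exact absurd hy₁ (ne_of_gt hv2)

lemma mono_btw [ConnectedSpace β] {h : α → β} (hcont : Continuous h)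
    (hinj : Function.Injective h) {a x c : α} (hax : a ≤ x) (hxc : x ≤ c) :
    min (h a) (h c) ≤ h x ∧ h x ≤ max (h a) (h c) := by
  haveI : DenselyOrdered β := denselyOrdered_of_connected
  have aux1 := btw_aux hcont hinj hax hxc
  have aux2 : ¬(h x < h a ∧ h x < h c) := by
    have := btw_aux (α := α) (β := βᵒᵈ) (h := fun y => OrderDual.toDual (h y))
      hcont (fun y₁ y₂ hy => hinj (by exact_mod_cast hy)) hax hxc
    simpa using this
  constructor
  · by_contra hmin
    exact aux2 (lt_min_iff.1 (not_le.1 hmin))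
  · by_contra hmax
    exact aux1 ⟨(le_max_left _ _).trans_lt (not_le.1 hmax), (le_max_right _ _).trans_lt (not_le.1 hmax)⟩

end Between


section SumOrder

variable {L M : Type u} [LinearOrder L] [TopologicalSpace L] [OrderTopology L]
  [CompactSpace L] [ConnectedSpace L]
  [LinearOrder M] [TopologicalSpace M] [OrderTopology M] [CompactSpace M] [ConnectedSpace M]

/-- Componentwise order on the disjoint sum. -/
def sle : L ⊕ M → L ⊕ M → Prop := Sum.LiftRel (· ≤ ·) (· ≤ ·)

lemma sle_isLeft {x y : L ⊕ M} (h : sle x y) : x.isLeft = y.isLeft := by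
  cases h <;> rfl

lemma sle_total {x y : L ⊕ M} (h : x.isLeft = y.isLeft) : sle x y ∨ sle y x := by
  cases x <;> cases y <;> simp_all
  · exact (le_total _ _).imp Sum.LiftRel.inl Sum.LiftRel.inl
  · exact (le_total _ _).imp Sum.LiftRel.inr Sum.LiftRel.inr

/-- A piece: an open image of an order-connected set in one of the two components. -/
def IsPiece (S : Set (L ⊕ M)) : Prop :=
  IsOpen S ∧ ((∃ I : Set L, I.OrdConnected ∧ S = Sum.inl '' I) ∨
    (∃ I : Set M, I.OrdConnected ∧ S = Sum.inr '' I))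

lemma piece_side {S : Set (L ⊕ M)} (hS : IsPiece S) {x y : L ⊕ M}
    (hx : x ∈ S) (hy : y ∈ S) : x.isLeft = y.isLeft := by
  rcases hS.2 with ⟨I, -, rfl⟩ | ⟨I, -, rfl⟩
  · obtain ⟨-, -, rfl⟩ := hx; obtain ⟨-, -, rfl⟩ := hy; rfl
  · obtain ⟨-, -, rfl⟩ := hx; obtain ⟨-, -, rfl⟩ := hy; rfl

lemma piece_conv {S : Set (L ⊕ M)} (hS : IsPiece S) {p q r : L ⊕ M}
    (hp : p ∈ S) (hq : q ∈ S) (hpr : sle p r) (hrq : sle r q) : r ∈ S := by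
  rcases hS.2 with ⟨I, hI, rfl⟩ | ⟨I, hI, rfl⟩
  · obtain ⟨pl, hpl, rfl⟩ := hp
    obtain ⟨ql, hql, rfl⟩ := hq
    cases hpr with
    | inl h1 =>
      cases hrq with
      | inl h2 => exact ⟨_, hI.out hpl hql ⟨h1, h2⟩, rfl⟩
  · obtain ⟨pl, hpl, rfl⟩ := hp
    obtain ⟨ql, hql, rfl⟩ := hq
    cases hpr with
    | inr h1 =>
      cases hrq with
      | inr h2 => exact ⟨_, hI.out hpl hql ⟨h1, h2⟩, rfl⟩

private lemma q_core {F : Set (Set (L ⊕ M))} (hF : ∀ S ∈ F, IsPiece S) {z p q r : L ⊕ M}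
    (hzp : (z, p) ∈ compRel (⋃ S ∈ F, S ×ˢ S) (⋃ S ∈ F, S ×ˢ S))
    (hzq : (z, q) ∈ compRel (⋃ S ∈ F, S ×ˢ S) (⋃ S ∈ F, S ×ˢ S))
    (hpr : sle p r) (hrq : sle r q) :
    (z, r) ∈ compRel (⋃ S ∈ F, S ×ˢ S) (⋃ S ∈ F, S ×ˢ S) := by
  have memW : ∀ {x y : L ⊕ M}, (x, y) ∈ (⋃ S ∈ F, S ×ˢ S) ↔ ∃ S ∈ F, x ∈ S ∧ y ∈ S := by
    intro x y
    simp only [mem_iUnion, Set.mem_prod, exists_prop]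
  obtain ⟨w₁, hzw₁, hw₁p⟩ := hzp
  obtain ⟨w₂, hzw₂, hw₂q⟩ := hzq
  obtain ⟨S₁, hS₁F, hzS₁, hw₁S₁⟩ := memW.1 hzw₁
  obtain ⟨S₂, hS₂F, hw₁S₂, hpS₂⟩ := memW.1 hw₁p
  obtain ⟨S₃, hS₃F, hzS₃, hw₂S₃⟩ := memW.1 hzw₂
  obtain ⟨S₄, hS₄F, hw₂S₄, hqS₄⟩ := memW.1 hw₂q
  have hw₁r : w₁.isLeft = r.isLeft :=
    (piece_side (hF S₂ hS₂F) hw₁S₂ hpS₂).trans (sle_isLeft hpr)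
  have hzr : z.isLeft = r.isLeft := (piece_side (hF S₁ hS₁F) hzS₁ hw₁S₁).trans hw₁r
  have hw₂r : w₂.isLeft = r.isLeft := (piece_side (hF S₃ hS₃F) hzS₃ hw₂S₃).symm.trans hzr
  rcases sle_total hw₁r.symm with hrw₁ | hw₁r'
  · have hrS₂ : r ∈ S₂ := piece_conv (hF S₂ hS₂F) hpS₂ hw₁S₂ hpr hrw₁
    exact ⟨w₁, hzw₁, memW.2 ⟨S₂, hS₂F, hw₁S₂, hrS₂⟩⟩
  · rcases sle_total hzr with hzr' | hrz
    · rcases sle_total hw₂r.symm with hrw₂ | hw₂r'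
      · have hrS₃ : r ∈ S₃ := piece_conv (hF S₃ hS₃F) hzS₃ hw₂S₃ hzr' hrw₂
        exact ⟨r, memW.2 ⟨S₃, hS₃F, hzS₃, hrS₃⟩, memW.2 ⟨S₃, hS₃F, hrS₃, hrS₃⟩⟩
      · have hrS₄ : r ∈ S₄ := piece_conv (hF S₄ hS₄F) hw₂S₄ hqS₄ hw₂r' hrq
        exact ⟨w₂, hzw₂, memW.2 ⟨S₄, hS₄F, hw₂S₄, hrS₄⟩⟩
    · have hrS₁ : r ∈ S₁ := piece_conv (hF S₁ hS₁F) hw₁S₁ hzS₁ hw₁r' hrz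
      exact ⟨r, memW.2 ⟨S₁, hS₁F, hzS₁, hrS₁⟩, memW.2 ⟨S₁, hS₁F, hrS₁, hrS₁⟩⟩

lemma q_absorb {F : Set (Set (L ⊕ M))} (hF : ∀ S ∈ F, IsPiece S) {z p q r : L ⊕ M}
    (hzp : (z, p) ∈ compRel (⋃ S ∈ F, S ×ˢ S) (⋃ S ∈ F, S ×ˢ S))
    (hzq : (z, q) ∈ compRel (⋃ S ∈ F, S ×ˢ S) (⋃ S ∈ F, S ×ˢ S))
    (hbtw : sle p r ∧ sle r q ∨ sle q r ∧ sle r p) :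
    (z, r) ∈ compRel (⋃ S ∈ F, S ×ˢ S) (⋃ S ∈ F, S ×ˢ S) := by
  rcases hbtw with ⟨h1, h2⟩ | ⟨h1, h2⟩
  · exact q_core hF hzp hzq h1 h2
  · exact q_core hF hzq hzp h1 h2

lemma piece_nhd (x : L ⊕ M) {U : Set (L ⊕ M)} (hU : U ∈ 𝓝 x) :
    ∃ S : Set (L ⊕ M), IsPiece S ∧ x ∈ S ∧ S ⊆ U := by
  cases x with
  | inl a =>
    have hU' : Sum.inl ⁻¹' U ∈ 𝓝 a := continuous_inl.continuousAt.preimage_mem_nhds hU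
    obtain ⟨I, hIopen, hIconn, haI, hIsub⟩ := exists_ordConnected_nhd hU'
    exact ⟨Sum.inl '' I, ⟨isOpenMap_inl I hIopen, Or.inl ⟨I, hIconn, rfl⟩⟩,
      mem_image_of_mem _ haI, image_subset_iff.2 hIsub⟩
  | inr a =>
    have hU' : Sum.inr ⁻¹' U ∈ 𝓝 a := continuous_inr.continuousAt.preimage_mem_nhds hU
    obtain ⟨I, hIopen, hIconn, haI, hIsub⟩ := exists_ordConnected_nhd hU'
    exact ⟨Sum.inr '' I, ⟨isOpenMap_inr I hIopen, Or.inr ⟨I, hIconn, rfl⟩⟩,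
      mem_image_of_mem _ haI, image_subset_iff.2 hIsub⟩

lemma piece_decomp {V : Set ((L ⊕ M) × (L ⊕ M))} (hVopen : IsOpen V)
    (hVdiag : Set.diagonal (L ⊕ M) ⊆ V) :
    ∃ F : Set (Set (L ⊕ M)), (∀ S ∈ F, IsPiece S) ∧ (∀ x, ∃ S ∈ F, x ∈ S) ∧
      (⋃ S ∈ F, S ×ˢ S) ⊆ V := by
  have key : ∀ x : L ⊕ M, ∃ S : Set (L ⊕ M), IsPiece S ∧ x ∈ S ∧ S ×ˢ S ⊆ V := by
    intro x
    have hmem : V ∈ 𝓝 (x, x) := hVopen.mem_nhds (hVdiag (mem_diagonal x))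
    rw [nhds_prod_eq] at hmem
    obtain ⟨U₁, hU₁, U₂, hU₂, hsub⟩ := Filter.mem_prod_iff.1 hmem
    obtain ⟨S, hSp, hxS, hSsub⟩ := piece_nhd x (Filter.inter_mem hU₁ hU₂)
    refine ⟨S, hSp, hxS, ?_⟩
    rintro ⟨y₁, y₂⟩ ⟨h1, h2⟩
    exact hsub ⟨(hSsub h1).1, (hSsub h2).2⟩
  choose S hSpiece hxS hSsub using key
  obtain ⟨t, ht⟩ := isCompact_univ.elim_finite_subcover S (fun x => (hSpiece x).1)
    (fun x _ => mem_iUnion.2 ⟨x, hxS x⟩)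
  refine ⟨S '' ↑t, ?_, ?_, ?_⟩
  · rintro S' ⟨x, -, rfl⟩; exact hSpiece x
  · intro x
    obtain ⟨i, hi, hxi⟩ := mem_iUnion₂.1 (ht (mem_univ x))
    exact ⟨S i, ⟨i, hi, rfl⟩, hxi⟩
  · apply iUnion₂_subset
    rintro S' ⟨x, -, rfl⟩
    exact hSsub x

lemma range_dichotomy {γ : Type u} [TopologicalSpace γ] [ConnectedSpace γ]
    {k : γ → L ⊕ M} (hc : Continuous k) :
    (∀ y, ∃ b, k y = Sum.inl b) ∨ (∀ y, ∃ b, k y = Sum.inr b) := by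
  have hpre : IsPreconnected (range k) := isPreconnected_range hc
  have hdisj : Disjoint (range (Sum.inl : L → L ⊕ M)) (range (Sum.inr : M → L ⊕ M)) := by
    rw [Set.disjoint_left]
    rintro z ⟨a, rfl⟩ ⟨b, hb⟩
    exact Sum.inl_ne_inr hb.symm
  have hsub : range k ⊆ range Sum.inl ∪ range Sum.inr := by
    rintro z -
    cases z with
    | inl a => exact Or.inl ⟨a, rfl⟩
    | inr a => exact Or.inr ⟨a, rfl⟩
  by_cases hin : (range k ∩ range (Sum.inl : L → L ⊕ M)).Nonempty
  · left
    have hall : range k ⊆ range Sum.inl :=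
      hpre.subset_left_of_subset_union isOpen_range_inl isOpen_range_inr hdisj hsub hin
    intro y
    obtain ⟨b, hb⟩ := hall (mem_range_self y)
    exact ⟨b, hb.symm⟩
  · right
    intro y
    cases hky : k y with
    | inl b => exact absurd ⟨k y, mem_range_self y, ⟨b, hky.symm⟩⟩ hin
    | inr b => exact ⟨b, rfl⟩

lemma factor_inl {γ : Type u} [TopologicalSpace γ] {k : γ → L ⊕ M} (hc : Continuous k)
    (hr : ∀ y, ∃ b, k y = Sum.inl b) :
    ∃ h : γ → L, Continuous h ∧ ∀ y, Sum.inl (h y) = k y := by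
  refine ⟨fun y => (hr y).choose, ?_, fun y => ((hr y).choose_spec).symm⟩
  rw [(IsOpenEmbedding.inl (X := L) (Y := M)).toIsEmbedding.continuous_iff]
  have heq : (Sum.inl ∘ fun y => (hr y).choose) = k := funext fun y => ((hr y).choose_spec).symm
  rw [heq]; exact hc

lemma factor_inr {γ : Type u} [TopologicalSpace γ] {k : γ → L ⊕ M} (hc : Continuous k)
    (hr : ∀ y, ∃ b, k y = Sum.inr b) :
    ∃ h : γ → M, Continuous h ∧ ∀ y, Sum.inr (h y) = k y := by
  refine ⟨fun y => (hr y).choose, ?_, fun y => ((hr y).choose_spec).symm⟩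
  rw [(IsOpenEmbedding.inr (X := L) (Y := M)).toIsEmbedding.continuous_iff]
  have heq : (Sum.inr ∘ fun y => (hr y).choose) = k := funext fun y => ((hr y).choose_spec).symm
  rw [heq]; exact hc

private lemma btw_out {γ : Type u} [LinearOrder γ] {u v w : γ}
    (hmin : min u w ≤ v) (hmax : v ≤ max u w) : (u ≤ v ∧ v ≤ w) ∨ (w ≤ v ∧ v ≤ u) := by
  rcases le_total u w with h | h
  · rw [min_eq_left h] at hmin; rw [max_eq_right h] at hmax; exact Or.inl ⟨hmin, hmax⟩
  · rw [min_eq_right h] at hmin; rw [max_eq_left h] at hmax; exact Or.inr ⟨hmin, hmax⟩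

private lemma btw_case_inl (g : (L ⊕ M) ≃ₜ (L ⊕ M)) {a x c : L}
    (hax : a ≤ x) (hxc : x ≤ c) :
    (sle (g (Sum.inl a)) (g (Sum.inl x)) ∧ sle (g (Sum.inl x)) (g (Sum.inl c))) ∨
    (sle (g (Sum.inl c)) (g (Sum.inl x)) ∧ sle (g (Sum.inl x)) (g (Sum.inl a))) := by
  have hc : Continuous (fun y : L => g (Sum.inl y)) := g.continuous.comp continuous_inl
  have hki : Function.Injective (fun y : L => g (Sum.inl y)) :=
    fun y₁ y₂ he => Sum.inl_injective (g.injective he)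
  rcases range_dichotomy hc with hrange | hrange
  · obtain ⟨h, hhc, hhk⟩ := factor_inl hc hrange
    have hinj : Function.Injective h := fun y₁ y₂ he =>
      hki (show g _ = g _ by rw [← hhk y₁, ← hhk y₂, he])
    obtain ⟨hmin, hmax⟩ := mono_btw hhc hinj hax hxc
    rcases btw_out hmin hmax with ⟨u1, u2⟩ | ⟨u1, u2⟩
    · left
      rw [← hhk a, ← hhk x, ← hhk c]
      exact ⟨Sum.LiftRel.inl u1, Sum.LiftRel.inl u2⟩
    · right
      rw [← hhk a, ← hhk x, ← hhk c]
      exact ⟨Sum.LiftRel.inl u1, Sum.LiftRel.inl u2⟩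
  · obtain ⟨h, hhc, hhk⟩ := factor_inr hc hrange
    have hinj : Function.Injective h := fun y₁ y₂ he =>
      hki (show g _ = g _ by rw [← hhk y₁, ← hhk y₂, he])
    obtain ⟨hmin, hmax⟩ := mono_btw hhc hinj hax hxc
    rcases btw_out hmin hmax with ⟨u1, u2⟩ | ⟨u1, u2⟩
    · left
      rw [← hhk a, ← hhk x, ← hhk c]
      exact ⟨Sum.LiftRel.inr u1, Sum.LiftRel.inr u2⟩
    · right
      rw [← hhk a, ← hhk x, ← hhk c]
      exact ⟨Sum.LiftRel.inr u1, Sum.LiftRel.inr u2⟩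

private lemma btw_case_inr (g : (L ⊕ M) ≃ₜ (L ⊕ M)) {a x c : M}
    (hax : a ≤ x) (hxc : x ≤ c) :
    (sle (g (Sum.inr a)) (g (Sum.inr x)) ∧ sle (g (Sum.inr x)) (g (Sum.inr c))) ∨
    (sle (g (Sum.inr c)) (g (Sum.inr x)) ∧ sle (g (Sum.inr x)) (g (Sum.inr a))) := by
  have hc : Continuous (fun y : M => g (Sum.inr y)) := g.continuous.comp continuous_inr
  have hki : Function.Injective (fun y : M => g (Sum.inr y)) :=
    fun y₁ y₂ he => Sum.inr_injective (g.injective he)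
  rcases range_dichotomy hc with hrange | hrange
  · obtain ⟨h, hhc, hhk⟩ := factor_inl hc hrange
    have hinj : Function.Injective h := fun y₁ y₂ he =>
      hki (show g _ = g _ by rw [← hhk y₁, ← hhk y₂, he])
    obtain ⟨hmin, hmax⟩ := mono_btw hhc hinj hax hxc
    rcases btw_out hmin hmax with ⟨u1, u2⟩ | ⟨u1, u2⟩
    · left
      rw [← hhk a, ← hhk x, ← hhk c]
      exact ⟨Sum.LiftRel.inl u1, Sum.LiftRel.inl u2⟩
    · right
      rw [← hhk a, ← hhk x, ← hhk c]
      exact ⟨Sum.LiftRel.inl u1, Sum.LiftRel.inl u2⟩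
  · obtain ⟨h, hhc, hhk⟩ := factor_inr hc hrange
    have hinj : Function.Injective h := fun y₁ y₂ he =>
      hki (show g _ = g _ by rw [← hhk y₁, ← hhk y₂, he])
    obtain ⟨hmin, hmax⟩ := mono_btw hhc hinj hax hxc
    rcases btw_out hmin hmax with ⟨u1, u2⟩ | ⟨u1, u2⟩
    · left
      rw [← hhk a, ← hhk x, ← hhk c]
      exact ⟨Sum.LiftRel.inr u1, Sum.LiftRel.inr u2⟩
    · right
      rw [← hhk a, ← hhk x, ← hhk c]
      exact ⟨Sum.LiftRel.inr u1, Sum.LiftRel.inr u2⟩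

lemma g_btw (g : (L ⊕ M) ≃ₜ (L ⊕ M)) {a x c : L ⊕ M} (h1 : sle a x) (h2 : sle x c) :
    (sle (g a) (g x) ∧ sle (g x) (g c)) ∨ (sle (g c) (g x) ∧ sle (g x) (g a)) := by
  cases h1 with
  | inl hax =>
    cases h2 with
    | inl hxc => exact btw_case_inl g hax hxc
  | inr hax =>
    cases h2 with
    | inr hxc => exact btw_case_inr g hax hxc

end SumOrder

section KeyA

variable {L M : Type u} [LinearOrder L] [TopologicalSpace L] [OrderTopology L]
  [CompactSpace L] [ConnectedSpace L]
  [LinearOrder M] [TopologicalSpace M] [OrderTopology M] [CompactSpace M] [ConnectedSpace M]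

lemma comp_shrink {γ : Type*} [TopologicalSpace γ] [CompactSpace γ] [T2Space γ]
    {V : Set (γ × γ)} (hVopen : IsOpen V) (hVdiag : Set.diagonal γ ⊆ V) :
    ∃ V₀ : Set (γ × γ), IsOpen V₀ ∧ Set.diagonal γ ⊆ V₀ ∧ compRel V₀ V₀ ⊆ V := by
  letI : UniformSpace γ := uniformSpaceOfCompactR1
  have hV : V ∈ 𝓤 γ := by
    rw [← nhdsSet_diagonal_eq_uniformity]
    exact hVopen.mem_nhdsSet.2 hVdiag
  obtain ⟨V₁, hV₁, hcomp⟩ := comp_mem_uniformity_sets hV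
  rw [← nhdsSet_diagonal_eq_uniformity] at hV₁
  obtain ⟨V₀, hV₀open, hV₀diag, hV₀sub⟩ := mem_nhdsSet_iff_exists.1 hV₁
  exact ⟨V₀, hV₀open, hV₀diag, (compRel_mono hV₀sub hV₀sub).trans hcomp⟩

lemma keyA (f₀ : (L ⊕ M) ≃ₜ (L ⊕ M)) {V : Set ((L ⊕ M) × (L ⊕ M))}
    (hVopen : IsOpen V) (hVdiag : Set.diagonal (L ⊕ M) ⊆ V) :
    ∀ᶠ g : (L ⊕ M) ≃ₜ (L ⊕ M) in 𝓝 f₀, ∀ x, (f₀ x, g x) ∈ V := by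
  obtain ⟨V₀, hV₀open, hV₀diag, hV₀comp⟩ := comp_shrink hVopen hVdiag
  obtain ⟨F₀, hF₀piece, hF₀cov, hF₀sub⟩ := piece_decomp hV₀open hV₀diag
  set W : Set ((L ⊕ M) × (L ⊕ M)) := ⋃ S ∈ F₀, S ×ˢ S with hWdef
  have hWopen : IsOpen W :=
    isOpen_biUnion fun S hS => ((hF₀piece S hS).1.prod (hF₀piece S hS).1)
  have hWdiag : Set.diagonal (L ⊕ M) ⊆ W := by
    rintro ⟨x, y⟩ (rfl : x = y)
    obtain ⟨S, hSF, hxS⟩ := hF₀cov x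
    exact mem_biUnion hSF ⟨hxS, hxS⟩
  have hEopen : IsOpen ((fun p : (L ⊕ M) × (L ⊕ M) => (f₀ p.1, f₀ p.2)) ⁻¹' W) :=
    hWopen.preimage ((f₀.continuous.comp continuous_fst).prodMk
      (f₀.continuous.comp continuous_snd))
  have hEdiag : Set.diagonal (L ⊕ M) ⊆ (fun p : (L ⊕ M) × (L ⊕ M) => (f₀ p.1, f₀ p.2)) ⁻¹' W := by
    rintro ⟨x, y⟩ (rfl : x = y)
    exact hWdiag rfl
  obtain ⟨F₁, hF₁piece, hF₁cov, hF₁sub⟩ := piece_decomp hEopen hEdiag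
  -- chain cover of L
  have hJL : ∀ I ∈ (fun S => Sum.inl ⁻¹' S) '' F₁, IsOpen I ∧ I.OrdConnected := by
    rintro I ⟨S, hSF, rfl⟩
    change IsOpen (Sum.inl ⁻¹' S) ∧ (Sum.inl ⁻¹' S).OrdConnected
    refine ⟨(hF₁piece S hSF).1.preimage continuous_inl, ?_⟩
    rcases (hF₁piece S hSF).2 with ⟨I', hI', rfl⟩ | ⟨I', hI', rfl⟩
    · rw [Set.preimage_image_eq _ Sum.inl_injective]; exact hI'
    · have he : Sum.inl ⁻¹' (Sum.inr '' I') = (∅ : Set L) := by ext y; simp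
      rw [he]; exact Set.ordConnected_empty
  have hJM : ∀ I ∈ (fun S => Sum.inr ⁻¹' S) '' F₁, IsOpen I ∧ I.OrdConnected := by
    rintro I ⟨S, hSF, rfl⟩
    change IsOpen (Sum.inr ⁻¹' S) ∧ (Sum.inr ⁻¹' S).OrdConnected
    refine ⟨(hF₁piece S hSF).1.preimage continuous_inr, ?_⟩
    rcases (hF₁piece S hSF).2 with ⟨I', hI', rfl⟩ | ⟨I', hI', rfl⟩
    · have he : Sum.inr ⁻¹' (Sum.inl '' I') = (∅ : Set M) := by ext y; simp
      rw [he]; exact Set.ordConnected_empty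
    · rw [Set.preimage_image_eq _ Sum.inr_injective]; exact hI'
  obtain ⟨FL, hFL⟩ := chain_cover (𝒥 := (fun S => Sum.inl ⁻¹' S) '' F₁)
    (fun I hI => (hJL I hI).1) (fun I hI => (hJL I hI).2)
    (fun x => let ⟨S, hS, hxS⟩ := hF₁cov (Sum.inl x); ⟨_, ⟨S, hS, rfl⟩, hxS⟩)
  obtain ⟨FM, hFM⟩ := chain_cover (𝒥 := (fun S => Sum.inr ⁻¹' S) '' F₁)
    (fun I hI => (hJM I hI).1) (fun I hI => (hJM I hI).2)
    (fun x => let ⟨S, hS, hxS⟩ := hF₁cov (Sum.inr x); ⟨_, ⟨S, hS, rfl⟩, hxS⟩)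
  -- pointwise closeness is eventually true
  have hev1 : ∀ y : L ⊕ M, ∀ᶠ g : (L ⊕ M) ≃ₜ (L ⊕ M) in 𝓝 f₀, (f₀ y, g y) ∈ W := by
    intro y
    have hco : Continuous fun g : (L ⊕ M) ≃ₜ (L ⊕ M) => (g : (L ⊕ M) → (L ⊕ M)) y :=
      (continuous_apply y).comp continuous_induced_dom
    have hopen : IsOpen {g : (L ⊕ M) ≃ₜ (L ⊕ M) | (f₀ y, g y) ∈ W} :=
      hWopen.preimage (continuous_const.prodMk hco)
    exact hopen.mem_nhds (hWdiag (Set.mem_diagonal (f₀ y)))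
  have hevL : ∀ᶠ g : (L ⊕ M) ≃ₜ (L ⊕ M) in 𝓝 f₀,
      ∀ b ∈ FL, (f₀ (Sum.inl b), g (Sum.inl b)) ∈ W :=
    (Finset.eventually_all _).2 fun b _ => hev1 (Sum.inl b)
  have hevM : ∀ᶠ g : (L ⊕ M) ≃ₜ (L ⊕ M) in 𝓝 f₀,
      ∀ b ∈ FM, (f₀ (Sum.inr b), g (Sum.inr b)) ∈ W :=
    (Finset.eventually_all _).2 fun b _ => hev1 (Sum.inr b)
  filter_upwards [hevL, hevM] with g hgL hgM
  intro x
  have main : (f₀ x, g x) ∈ compRel W W := by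
    cases x with
    | inl xl =>
      obtain ⟨a', haF, c', hcF, hax, hxc, I, hI, hIcc⟩ := hFL xl
      obtain ⟨S₁, hS₁F, rfl⟩ := hI
      have haS : Sum.inl a' ∈ S₁ := hIcc ⟨le_rfl, hax.trans hxc⟩
      have hxS : Sum.inl xl ∈ S₁ := hIcc ⟨hax, hxc⟩
      have hcS : Sum.inl c' ∈ S₁ := hIcc ⟨hax.trans hxc, le_rfl⟩
      have hxaE : (f₀ (Sum.inl xl), f₀ (Sum.inl a')) ∈ W :=
        hF₁sub (show (Sum.inl xl, Sum.inl a') ∈ ⋃ S ∈ F₁, S ×ˢ S from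
          mem_biUnion hS₁F ⟨hxS, haS⟩)
      have hxcE : (f₀ (Sum.inl xl), f₀ (Sum.inl c')) ∈ W :=
        hF₁sub (show (Sum.inl xl, Sum.inl c') ∈ ⋃ S ∈ F₁, S ×ˢ S from
          mem_biUnion hS₁F ⟨hxS, hcS⟩)
      have hzp : (f₀ (Sum.inl xl), g (Sum.inl a')) ∈ compRel W W :=
        ⟨f₀ (Sum.inl a'), hxaE, hgL a' haF⟩
      have hzq : (f₀ (Sum.inl xl), g (Sum.inl c')) ∈ compRel W W :=
        ⟨f₀ (Sum.inl c'), hxcE, hgL c' hcF⟩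
      exact q_absorb hF₀piece hzp hzq
        (g_btw g (Sum.LiftRel.inl hax) (Sum.LiftRel.inl hxc))
    | inr xr =>
      obtain ⟨a', haF, c', hcF, hax, hxc, I, hI, hIcc⟩ := hFM xr
      obtain ⟨S₁, hS₁F, rfl⟩ := hI
      have haS : Sum.inr a' ∈ S₁ := hIcc ⟨le_rfl, hax.trans hxc⟩
      have hxS : Sum.inr xr ∈ S₁ := hIcc ⟨hax, hxc⟩
      have hcS : Sum.inr c' ∈ S₁ := hIcc ⟨hax.trans hxc, le_rfl⟩
      have hxaE : (f₀ (Sum.inr xr), f₀ (Sum.inr a')) ∈ W :=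
        hF₁sub (show (Sum.inr xr, Sum.inr a') ∈ ⋃ S ∈ F₁, S ×ˢ S from
          mem_biUnion hS₁F ⟨hxS, haS⟩)
      have hxcE : (f₀ (Sum.inr xr), f₀ (Sum.inr c')) ∈ W :=
        hF₁sub (show (Sum.inr xr, Sum.inr c') ∈ ⋃ S ∈ F₁, S ×ˢ S from
          mem_biUnion hS₁F ⟨hxS, hcS⟩)
      have hzp : (f₀ (Sum.inr xr), g (Sum.inr a')) ∈ compRel W W :=
        ⟨f₀ (Sum.inr a'), hxaE, hgM a' haF⟩
      have hzq : (f₀ (Sum.inr xr), g (Sum.inr c')) ∈ compRel W W :=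
        ⟨f₀ (Sum.inr c'), hxcE, hgM c' hcF⟩
      exact q_absorb hF₀piece hzp hzq
        (g_btw g (Sum.LiftRel.inr hax) (Sum.LiftRel.inr hxc))
  exact hV₀comp (compRel_mono hF₀sub hF₀sub main)

end KeyA

/-- Hom_p(L ⊕ M) is a topological group for compact connected LOTS L and M. -/
theorem stmt_11 {L M : Type u}
    [LinearOrder L] [TopologicalSpace L] [OrderTopology L] [CompactSpace L] [ConnectedSpace L]
    [LinearOrder M] [TopologicalSpace M] [OrderTopology M] [CompactSpace M] [ConnectedSpace M] :
    Continuous (fun p : ((L ⊕ M) ≃ₜ (L ⊕ M)) × ((L ⊕ M) ≃ₜ (L ⊕ M)) => p.2.trans p.1) ∧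
      Continuous (fun f : (L ⊕ M) ≃ₜ (L ⊕ M) => f.symm) := by
  letI : UniformSpace (L ⊕ M) := uniformSpaceOfCompactR1
  have hcoeC : Continuous fun f : (L ⊕ M) ≃ₜ (L ⊕ M) =>
      (f.toContinuousMap : C(L ⊕ M, L ⊕ M)) := by
    rw [continuous_iff_continuousAt]
    intro f₀
    rw [ContinuousAt, ContinuousMap.tendsto_iff_tendstoUniformly]
    intro V hV
    rw [← nhdsSet_diagonal_eq_uniformity] at hV
    obtain ⟨V', hV'open, hV'diag, hV'sub⟩ := mem_nhdsSet_iff_exists.1 hV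
    filter_upwards [keyA f₀ hV'open hV'diag] with g hg x
    exact hV'sub (hg x)
  have hmul : Continuous
      (fun p : ((L ⊕ M) ≃ₜ (L ⊕ M)) × ((L ⊕ M) ≃ₜ (L ⊕ M)) => p.2.trans p.1) := by
    apply continuous_induced_rng.2
    apply continuous_pi
    intro x
    have h1 : Continuous fun p : ((L ⊕ M) ≃ₜ (L ⊕ M)) × ((L ⊕ M) ≃ₜ (L ⊕ M)) =>
        (p.1.toContinuousMap : C(L ⊕ M, L ⊕ M)) := hcoeC.comp continuous_fst
    have h2 : Continuous fun p : ((L ⊕ M) ≃ₜ (L ⊕ M)) × ((L ⊕ M) ≃ₜ (L ⊕ M)) =>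
        (p.2 : (L ⊕ M) → (L ⊕ M)) x :=
      (continuous_apply x).comp (continuous_induced_dom.comp continuous_snd)
    exact continuous_eval.comp (h1.prodMk h2)
  have hsymmC : Continuous fun f : (L ⊕ M) ≃ₜ (L ⊕ M) =>
      (f.symm.toContinuousMap : C(L ⊕ M, L ⊕ M)) := by
    rw [ContinuousMap.continuous_compactOpen]
    intro K hK U hU
    have hset : {f : (L ⊕ M) ≃ₜ (L ⊕ M) | Set.MapsTo ⇑(f.symm.toContinuousMap) K U} =
        (fun f : (L ⊕ M) ≃ₜ (L ⊕ M) => f.toContinuousMap) ⁻¹'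
          {h : C(L ⊕ M, L ⊕ M) | Set.MapsTo ⇑h Uᶜ Kᶜ} := by
      ext f
      simp only [Set.mem_setOf_eq, Set.mem_preimage, ContinuousMap.coe_mk,
        Homeomorph.toContinuousMap]
      constructor
      · intro h y hy hyK
        have := h hyK
        rw [Homeomorph.symm_apply_apply] at this
        exact hy this
      · intro h x' hx'
        by_contra hxU
        have := h (hxU : f.symm x' ∈ Uᶜ)
        rw [Homeomorph.apply_symm_apply] at this
        exact this hx'
    rw [hset]
    exact (ContinuousMap.isOpen_setOf_mapsTo hU.isClosed_compl.isCompact hK.isClosed.isOpen_compl).preimage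
      hcoeC
  have hinv : Continuous (fun f : (L ⊕ M) ≃ₜ (L ⊕ M) => f.symm) := by
    apply continuous_induced_rng.2
    have hc : Continuous fun f : (L ⊕ M) ≃ₜ (L ⊕ M) =>
        (⇑(f.symm.toContinuousMap) : (L ⊕ M) → (L ⊕ M)) :=
      (continuous_coeFun (F := C(L ⊕ M, L ⊕ M))).comp hsymmC
    exact hc
  exact ⟨hmul, hinv⟩
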